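/- For every finite strategic game H, LW^ω ⊆ LS^ω: the outcome of iterated elimination of strategies weakly dominated by a pure strategy is contained in the outcome of iterated elimination of strategies strictly dominated by a pure strategy. -/

import Mathlib

open Function

/-- The opponents' part of the joint strategy `t` lies in the restriction `G`. -/
def OppIn {ι : Type*} [DecidableEq ι] {σ : ι → Type*} (G : ∀ i, Set (σ i)) (i : ι) (t : ∀ j, σ j) : Prop :=
  ∀ j, j ≠ i → t j ∈ G j

/-- `s'` strictly dominates `s` on the restriction `G` (pure strategies). -/
def SDom {ι : Type*} [DecidableEq ι] {σ : ι → Type*} (p : ι → (∀ j, σ j) → ℝ) (G : ∀ i, Set (σ i))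
    (i : ι) (s' s : σ i) : Prop :=
  ∀ t : ∀ j, σ j, OppIn G i t → p i (update t i s) < p i (update t i s')

/-- `s'` weakly dominates `s` on the restriction `G` (pure strategies). -/
def WDom {ι : Type*} [DecidableEq ι] {σ : ι → Type*} (p : ι → (∀ j, σ j) → ℝ) (G : ∀ i, Set (σ i))
    (i : ι) (s' s : σ i) : Prop :=
  (∀ t : ∀ j, σ j, OppIn G i t → p i (update t i s) ≤ p i (update t i s')) ∧
  (∃ t : ∀ j, σ j, OppIn G i t ∧ p i (update t i s) < p i (update t i s'))

/-- Probability distributions over a finite type with support contained in `A`. -/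
def Mixed {α : Type*} [Fintype α] (A : Set α) : Set (α → ℝ) :=
  {m | (∀ a, 0 ≤ m a) ∧ ∑ a, m a = 1 ∧ ∀ a, m a ≠ 0 → a ∈ A}

/-- Expected payoff of player `i` using mixed strategy `m` against `t₋ᵢ`. -/
def epay {ι : Type*} [DecidableEq ι] {σ : ι → Type*} [∀ i, Fintype (σ i)]
    (p : ι → (∀ j, σ j) → ℝ) (i : ι) (m : σ i → ℝ) (t : ∀ j, σ j) : ℝ :=
  ∑ a, m a * p i (update t i a)

/-- The mixed strategy `m` strictly dominates `s` on `G`. -/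
def MSDom {ι : Type*} [DecidableEq ι] {σ : ι → Type*} [∀ i, Fintype (σ i)]
    (p : ι → (∀ j, σ j) → ℝ) (G : ∀ i, Set (σ i)) (i : ι) (m : σ i → ℝ) (s : σ i) : Prop :=
  ∀ t : ∀ j, σ j, OppIn G i t → p i (update t i s) < epay p i m t

/-- The mixed strategy `m` weakly dominates `s` on `G`. -/
def MWDom {ι : Type*} [DecidableEq ι] {σ : ι → Type*} [∀ i, Fintype (σ i)]
    (p : ι → (∀ j, σ j) → ℝ) (G : ∀ i, Set (σ i)) (i : ι) (m : σ i → ℝ) (s : σ i) : Prop :=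
  (∀ t : ∀ j, σ j, OppIn G i t → p i (update t i s) ≤ epay p i m t) ∧
  (∃ t : ∀ j, σ j, OppIn G i t ∧ p i (update t i s) < epay p i m t)

/-- Local elimination of strategies strictly dominated by a pure strategy. -/
def LS {ι : Type*} [DecidableEq ι] {σ : ι → Type*} (p : ι → (∀ j, σ j) → ℝ)
    (G : ∀ i, Set (σ i)) : ∀ i, Set (σ i) :=
  fun i => {s | s ∈ G i ∧ ¬ ∃ s' ∈ G i, SDom p G i s' s}

/-- Global elimination of strategies strictly dominated by a pure strategy. -/
def GS {ι : Type*} [DecidableEq ι] {σ : ι → Type*} (p : ι → (∀ j, σ j) → ℝ)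
    (G : ∀ i, Set (σ i)) : ∀ i, Set (σ i) :=
  fun i => {s | s ∈ G i ∧ ¬ ∃ s' : σ i, SDom p G i s' s}

/-- Local elimination of strategies weakly dominated by a pure strategy. -/
def LW {ι : Type*} [DecidableEq ι] {σ : ι → Type*} (p : ι → (∀ j, σ j) → ℝ)
    (G : ∀ i, Set (σ i)) : ∀ i, Set (σ i) :=
  fun i => {s | s ∈ G i ∧ ¬ ∃ s' ∈ G i, WDom p G i s' s}

/-- Global elimination of strategies weakly dominated by a pure strategy. -/
def GW {ι : Type*} [DecidableEq ι] {σ : ι → Type*} (p : ι → (∀ j, σ j) → ℝ)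
    (G : ∀ i, Set (σ i)) : ∀ i, Set (σ i) :=
  fun i => {s | s ∈ G i ∧ ¬ ∃ s' : σ i, WDom p G i s' s}

/-- Local elimination of strategies strictly dominated by a mixed strategy. -/
def MLS {ι : Type*} [DecidableEq ι] {σ : ι → Type*} [∀ i, Fintype (σ i)] (p : ι → (∀ j, σ j) → ℝ)
    (G : ∀ i, Set (σ i)) : ∀ i, Set (σ i) :=
  fun i => {s | s ∈ G i ∧ ¬ ∃ m ∈ Mixed (G i), MSDom p G i m s}

/-- Global elimination of strategies strictly dominated by a mixed strategy. -/
def MGS {ι : Type*} [DecidableEq ι] {σ : ι → Type*} [∀ i, Fintype (σ i)] (p : ι → (∀ j, σ j) → ℝ)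
    (G : ∀ i, Set (σ i)) : ∀ i, Set (σ i) :=
  fun i => {s | s ∈ G i ∧ ¬ ∃ m ∈ Mixed (Set.univ : Set (σ i)), MSDom p G i m s}

/-- Local elimination of strategies weakly dominated by a mixed strategy. -/
def MLW {ι : Type*} [DecidableEq ι] {σ : ι → Type*} [∀ i, Fintype (σ i)] (p : ι → (∀ j, σ j) → ℝ)
    (G : ∀ i, Set (σ i)) : ∀ i, Set (σ i) :=
  fun i => {s | s ∈ G i ∧ ¬ ∃ m ∈ Mixed (G i), MWDom p G i m s}

/-- Global elimination of strategies weakly dominated by a mixed strategy. -/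
def MGW {ι : Type*} [DecidableEq ι] {σ : ι → Type*} [∀ i, Fintype (σ i)] (p : ι → (∀ j, σ j) → ℝ)
    (G : ∀ i, Set (σ i)) : ∀ i, Set (σ i) :=
  fun i => {s | s ∈ G i ∧ ¬ ∃ m ∈ Mixed (Set.univ : Set (σ i)), MWDom p G i m s}

section Aux

lemma wdom_trans {ι : Type*} [DecidableEq ι] {σ : ι → Type*} (p : ι → (∀ j, σ j) → ℝ)
    (G : ∀ i, Set (σ i)) (i : ι) {a b c : σ i}
    (h1 : WDom p G i c b) (h2 : WDom p G i b a) : WDom p G i c a := by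
  obtain ⟨h1le, _⟩ := h1
  obtain ⟨h2le, t, ht, hlt⟩ := h2
  exact ⟨fun t' ht' => le_trans (h2le t' ht') (h1le t' ht'),
    ⟨t, ht, lt_of_lt_of_le hlt (h1le t ht)⟩⟩

lemma wdom_irrefl {ι : Type*} [DecidableEq ι] {σ : ι → Type*} (p : ι → (∀ j, σ j) → ℝ)
    (G : ∀ i, Set (σ i)) (i : ι) (a : σ i) : ¬ WDom p G i a a := by
  rintro ⟨-, t, -, hlt⟩; exact lt_irrefl _ hlt

/-- In a finite type with an irreflexive transitive relation, every element of `A`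
has a maximal (within `A`) element above-or-equal to it. -/
lemma exists_maximal_above {α : Type*} [Fintype α] (r : α → α → Prop)
    (hirr : ∀ a, ¬ r a a) (htr : ∀ a b c, r a b → r b c → r a c)
    (A : Set α) {x : α} (hx : x ∈ A) :
    ∃ y ∈ A, (y = x ∨ r x y) ∧ ∀ z ∈ A, ¬ r y z := by
  classical
  have key : ∀ n (x : α), x ∈ A → ({z | z ∈ A ∧ r x z}.toFinset.card ≤ n) →
      ∃ y ∈ A, (y = x ∨ r x y) ∧ ∀ z ∈ A, ¬ r y z := by
    intro n
    induction n with
    | zero =>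
      intro x hx hcard
      refine ⟨x, hx, Or.inl rfl, fun z hz hrz => ?_⟩
      have hmem : z ∈ {z | z ∈ A ∧ r x z}.toFinset := by simp [hz, hrz]
      have : {z | z ∈ A ∧ r x z}.toFinset = ∅ := Finset.card_eq_zero.mp (Nat.le_zero.mp hcard)
      simp [this] at hmem
    | succ n ih =>
      intro x hx hcard
      by_cases h : ∃ z ∈ A, r x z
      · obtain ⟨z, hzA, hxz⟩ := h
        have hsub : {w | w ∈ A ∧ r z w}.toFinset ⊆ {w | w ∈ A ∧ r x w}.toFinset := by
          intro w hw
          simp only [Set.mem_toFinset, Set.mem_setOf_eq] at hw ⊢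
          exact ⟨hw.1, htr _ _ _ hxz hw.2⟩
        have hz_mem : z ∈ {w | w ∈ A ∧ r x w}.toFinset := by simp [hzA, hxz]
        have hz_not : z ∉ {w | w ∈ A ∧ r z w}.toFinset := by simp [hirr z]
        have hlt : {w | w ∈ A ∧ r z w}.toFinset.card < {w | w ∈ A ∧ r x w}.toFinset.card :=
          Finset.card_lt_card (Finset.ssubset_iff_of_subset hsub |>.mpr ⟨z, hz_mem, hz_not⟩)
        obtain ⟨y, hyA, hy, hymax⟩ := ih z hzA (Nat.lt_succ_iff.mp (lt_of_lt_of_le hlt hcard))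
        refine ⟨y, hyA, Or.inr ?_, hymax⟩
        rcases hy with rfl | hy
        · exact hxz
        · exact htr _ _ _ hxz hy
      · exact ⟨x, hx, Or.inl rfl, fun z hz hr => h ⟨z, hz, hr⟩⟩
  exact key _ x hx le_rfl

lemma LW_iter_nonempty {ι : Type*} [DecidableEq ι] {σ : ι → Type*}
    [∀ i, Fintype (σ i)] [∀ i, Nonempty (σ i)] (p : ι → (∀ j, σ j) → ℝ) :
    ∀ k i, (((LW p)^[k] ⊤ : ∀ i, Set (σ i)) i).Nonempty := by
  intro k
  induction k with
  | zero => intro i; exact ⟨Classical.arbitrary _, trivial⟩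
  | succ k ih =>
    intro i
    obtain ⟨x, hx⟩ := ih i
    obtain ⟨y, hyA, -, hymax⟩ := exists_maximal_above
      (fun a b => WDom p ((LW p)^[k] ⊤) i b a)
      (fun a => wdom_irrefl p _ i a)
      (fun a b c hab hbc => wdom_trans p _ i hbc hab)
      (((LW p)^[k] ⊤ : ∀ i, Set (σ i)) i) hx
    rw [Function.iterate_succ_apply']
    exact ⟨y, hyA, fun ⟨z, hz, hd⟩ => hymax z hz hd⟩

lemma LW_iter_antitone {ι : Type*} [DecidableEq ι] {σ : ι → Type*}
    (p : ι → (∀ j, σ j) → ℝ) :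
    ∀ {k l : ℕ}, k ≤ l → ∀ i, (((LW p)^[l] ⊤ : ∀ i, Set (σ i)) i) ⊆ ((LW p)^[k] ⊤ : ∀ i, Set (σ i)) i := by
  have step : ∀ m i, (((LW p)^[m+1] ⊤ : ∀ i, Set (σ i)) i) ⊆ ((LW p)^[m] ⊤ : ∀ i, Set (σ i)) i := by
    intro m i s hs
    rw [Function.iterate_succ_apply'] at hs
    exact hs.1
  intro k l hkl
  induction hkl with
  | refl => exact fun i => subset_rfl
  | step h ih => exact fun i => (step _ i).trans (ih i)

end Aux

lemma LW_iter_stab {ι : Type*} [DecidableEq ι] [Fintype ι] {σ : ι → Type*}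
    [∀ i, Fintype (σ i)] (p : ι → (∀ j, σ j) → ℝ) :
    ∃ N : ℕ, ∀ k, ((LW p)^[N+k] ⊤ : ∀ i, Set (σ i)) = (LW p)^[N] ⊤ := by
  classical
  set c : ℕ → ℕ := fun k => ∑ i, (((LW p)^[k] ⊤ : ∀ i, Set (σ i)) i).toFinset.card with hc
  have hanti : ∀ {k l : ℕ}, k ≤ l → c l ≤ c k := by
    intro k l hkl
    exact Finset.sum_le_sum fun i _ =>
      Finset.card_le_card (Set.toFinset_subset_toFinset.mpr (LW_iter_antitone p hkl i))
  obtain ⟨N, hN⟩ : ∃ N, ∀ k, c N ≤ c k := by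
    have h1 : sInf (Set.range c) ∈ Set.range c := Nat.sInf_mem ⟨c 0, Set.mem_range_self 0⟩
    obtain ⟨N, hN⟩ := h1
    exact ⟨N, fun k => hN ▸ Nat.sInf_le (Set.mem_range_self k)⟩
  have hfix : ((LW p)^[N+1] ⊤ : ∀ i, Set (σ i)) = (LW p)^[N] ⊤ := by
    have hsum : c (N+1) = c N := le_antisymm (hanti (Nat.le_succ N)) (hN (N+1))
    have hle : ∀ i ∈ Finset.univ, (((LW p)^[N+1] ⊤ : ∀ i, Set (σ i)) i).toFinset.card
        ≤ (((LW p)^[N] ⊤ : ∀ i, Set (σ i)) i).toFinset.card := fun i _ =>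
      Finset.card_le_card (Set.toFinset_subset_toFinset.mpr (LW_iter_antitone p (Nat.le_succ N) i))
    have heq := (Finset.sum_eq_sum_iff_of_le hle).mp hsum
    funext i
    have := heq i (Finset.mem_univ i)
    have hfs : (((LW p)^[N+1] ⊤ : ∀ i, Set (σ i)) i).toFinset
        = (((LW p)^[N] ⊤ : ∀ i, Set (σ i)) i).toFinset :=
      Finset.eq_of_subset_of_card_le
        (Set.toFinset_subset_toFinset.mpr (LW_iter_antitone p (Nat.le_succ N) i)) this.ge
    exact Set.toFinset_inj.mp hfs
  refine ⟨N, fun k => ?_⟩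
  induction k with
  | zero => rfl
  | succ k ih =>
    calc ((LW p)^[N+(k+1)] ⊤ : ∀ i, Set (σ i)) = LW p ((LW p)^[N+k] ⊤) := by
          rw [← Nat.add_assoc, Function.iterate_succ_apply']
      _ = LW p ((LW p)^[N] ⊤) := by rw [ih]
      _ = (LW p)^[N+1] ⊤ := (Function.iterate_succ_apply' _ _ _).symm
      _ = (LW p)^[N] ⊤ := hfix


/-- LW^ω ⊆ LS^ω. -/
theorem LW_omega_subset_LS_omega {ι : Type*} [DecidableEq ι] [Fintype ι] {σ : ι → Type*}
    [∀ i, Fintype (σ i)] [∀ i, Nonempty (σ i)]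
    (hn : 1 < Fintype.card ι) (p : ι → (∀ j, σ j) → ℝ) :
    (⨅ k : ℕ, (LW p)^[k] ⊤) ≤ ⨅ k : ℕ, (LS p)^[k] ⊤ := by
  classical
  obtain ⟨N, hstab⟩ := LW_iter_stab p
  set W : ℕ → ∀ i, Set (σ i) := fun k => (LW p)^[k] ⊤ with hWdef
  have hWanti : ∀ {k l : ℕ}, k ≤ l → ∀ i, W l i ⊆ W k i := fun h => LW_iter_antitone p h
  have hWne : ∀ k i, (W k i).Nonempty := LW_iter_nonempty p
  have hsucc : ∀ m, W (m + 1) = LW p (W m) := fun m => by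
    simp only [hWdef]; exact Function.iterate_succ_apply' _ _ _
  have hfix : LW p (W N) = W N := by
    have h1 : W (N + 1) = W N := hstab 1
    rwa [hsucc] at h1
  -- main induction: W N ≤ (LS p)^[k] ⊤
  have main : ∀ k (j : ι) (s : σ j), s ∈ W N j → s ∈ ((LS p)^[k] ⊤ : ∀ i, Set (σ i)) j := by
    intro k
    induction k with
    | zero => intro j s _; trivial
    | succ k ih =>
      intro j s hs
      rw [Function.iterate_succ_apply']
      refine ⟨ih j s hs, ?_⟩
      rintro ⟨s', hs'S, hdom⟩
      -- s' strictly dominates s on W N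
      have hdomW : SDom p (W N) j s' s := fun t ht =>
        hdom t (fun j' hj' => ih j' (t j') (ht j' hj'))
      -- the set of strict dominators of s on W N
      set D : Set (σ j) := {x | SDom p (W N) j x s} with hD
      have hDne : D.Nonempty := ⟨s', hdomW⟩
      -- survival measure
      set ν : σ j → ℕ := fun x =>
        if h : x ∈ W N j then N + 1
        else Nat.find (⟨N, h⟩ : ∃ m, x ∉ W m j) with hν
      obtain ⟨x, hxD, hxmax⟩ := Set.Finite.exists_maximalFor ν D (Set.toFinite D) hDne
      by_cases hxW : x ∈ W N j
      · -- x weakly dominates s on W N, contradicting s ∈ LW p (W N) j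
        have ht0 : OppIn (W N) j (fun j' => (hWne N j').choose) :=
          fun j' _ => (hWne N j').choose_spec
        have hwd : WDom p (W N) j x s :=
          ⟨fun t ht => le_of_lt (hxD t ht), ⟨_, ht0, hxD _ ht0⟩⟩
        have hsfix : s ∈ LW p (W N) j := by rw [hfix]; exact hs
        exact hsfix.2 ⟨x, hxW, hwd⟩
      · -- x was eliminated at some stage m < N
        have hex : ∃ m, x ∉ W m j := ⟨N, hxW⟩
        set f := Nat.find hex with hf
        have hf_pos : 0 < f := by
          rw [hf]
          exact (Nat.find_pos hex).mpr (fun h => h trivial)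
        obtain ⟨m, hm⟩ : ∃ m, f = m + 1 := ⟨f - 1, (Nat.succ_pred_eq_of_pos hf_pos).symm⟩
        have hxm : x ∈ W m j := by
          by_contra hc
          exact absurd (hm ▸ Nat.lt_succ_self m : m < f) (not_lt.mpr (Nat.find_le hc))
        have hxm1 : x ∉ W (m+1) j := hm ▸ Nat.find_spec hex
        have hfleN : f ≤ N := Nat.find_le hxW
        have hm1leN : m + 1 ≤ N := hm ▸ hfleN
        -- x is weakly dominated in W m by some z ∈ W m j
        have hxLW : x ∉ LW p (W m) j := by
          rwa [hsucc] at hxm1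
        have hzex : ∃ z ∈ W m j, WDom p (W m) j z x := by
          by_contra hc
          exact hxLW ⟨hxm, hc⟩
        obtain ⟨z, hzA, hzd⟩ := hzex
        -- take a maximal weak-dominator y in W m j
        obtain ⟨y, hyA, hy, hymax⟩ := exists_maximal_above
          (fun a b => WDom p (W m) j b a)
          (fun a => wdom_irrefl p _ j a)
          (fun a b c hab hbc => wdom_trans p _ j hbc hab) (W m j) hzA
        have hyWm1 : y ∈ W (m+1) j := by
          rw [hsucc]
          exact ⟨hyA, fun ⟨w, hw, hd⟩ => hymax w hw hd⟩
        have hydomx : WDom p (W m) j y x := by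
          rcases hy with rfl | hy
          · exact hzd
          · exact wdom_trans p _ j hy hzd
        -- y strictly dominates s on W N
        have hyD : y ∈ D := by
          intro t ht
          have htm : OppIn (W m) j t := fun j' hj' =>
            hWanti (le_of_lt (Nat.lt_of_succ_le hm1leN)) j' (ht j' hj')
          exact lt_of_lt_of_le (hxD t ht) (hydomx.1 t htm)
        -- ν y > ν x, contradicting maximality
        have hνx : ν x = m + 1 := by
          simp only [hν, dif_neg hxW]
          exact hm ▸ rfl
        have hνy : m + 1 < ν y := by
          by_cases hyW : y ∈ W N j
          · simp only [hν, dif_pos hyW]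
            exact Nat.lt_succ_of_le hm1leN
          · simp only [hν, dif_neg hyW]
            rw [Nat.lt_find_iff]
            intro m' hm'
            intro hcon
            exact hcon (hWanti hm' j hyWm1)
        have := hxmax hyD (by omega)
        omega
  refine le_iInf fun k => le_trans (iInf_le _ N) ?_
  intro i x hx
  exact main k i x hx
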